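/- Let q be a real number with q ≥ 2, let z > 0 and t ∈ [0,1). If the cubic polynomial P_{z,t,q}(w) = z·((q−2)tw + t + w)² − w·((q−1)tw + 1)² in the variable w has a triple root (equivalently, the renormalization map R_{z,t,q} has a triple fixed point), then t = t₂(q) = (q − 2 + √(q² + 32q − 32))/(18(q − 1)). -/

import Mathlib

noncomputable section

open Polynomial

/-- `t₂(q) = (q − 2 + √(q² + 32q − 32))/(18(q − 1))`. -/
def tTwo (q : ℝ) : ℝ := (q - 2 + Real.sqrt (q ^ 2 + 32 * q - 32)) / (18 * (q - 1))

/-- The cubic polynomial `P_{z,t,q}(w) = z((q−2)tw + t + w)² − w((q−1)tw + 1)²`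
obtained from the fixed-point equation `R_{z,t,q}(w) = w` by clearing denominators. -/
def Ppoly (z t q : ℝ) : Polynomial ℝ :=
  C z * (C ((q - 2) * t) * X + C t + X) ^ 2 - X * (C ((q - 1) * t) * X + C 1) ^ 2

set_option maxHeartbeats 1600000 in
/-- **Lemma (triple fixed point).**  Let `q ≥ 2` be real, `z > 0`, and `t ∈ [0,1)`.
If the cubic `P_{z,t,q}` has a root of multiplicity three (equivalently, the
renormalization map `R_{z,t,q}` has a triple fixed point), then
`t = t₂(q) = (q − 2 + √(q² + 32q − 32))/(18(q − 1))`. -/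
theorem triple_fixed_point_implies_t_eq_tTwo
    (q : ℝ) (hq : 2 ≤ q) (z : ℝ) (hz : 0 < z) (t : ℝ) (ht0 : 0 ≤ t) (ht1 : t < 1)
    (htriple : ∃ w : ℝ, 3 ≤ (Ppoly z t q).rootMultiplicity w) :
    t = tTwo q := by
  obtain ⟨w, hw⟩ := htriple
  have hdvd : (X - C w) ^ 3 ∣ Ppoly z t q :=
    dvd_trans (pow_dvd_pow _ hw) (Polynomial.pow_rootMultiplicity_dvd _ _)
  obtain ⟨Q, hQ⟩ := hdvd
  have e0 : z * ((1 + (q-2)*t) * w + t) ^ 2 = w * ((q-1)*t*w + 1) ^ 2 := by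
    have h := congrArg (Polynomial.eval w) hQ
    simp [Ppoly] at h
    linear_combination h
  have e1 : 2*z*(1+(q-2)*t)*((1+(q-2)*t)*w + t)
      = ((q-1)*t*w+1)^2 + 2*(q-1)*t*w*((q-1)*t*w+1) := by
    have h := congrArg (Polynomial.eval w) (congrArg Polynomial.derivative hQ)
    simp [Ppoly, derivative_mul, derivative_pow] at h
    linear_combination h
  have e2 : 2*z*(1+(q-2)*t)^2 = 6*((q-1)*t)^2*w + 4*((q-1)*t) := by
    have h := congrArg (Polynomial.eval w)
      (congrArg Polynomial.derivative (congrArg Polynomial.derivative hQ))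
    simp [Ppoly, derivative_mul, derivative_pow] at h
    linear_combination h
  clear hQ hw
  -- t ≠ 0
  have htne : t ≠ 0 := by
    intro h
    rw [h] at e2
    norm_num at e2
    nlinarith [e2, hz]
  have htpos : 0 < t := lt_of_le_of_ne ht0 (Ne.symm htne)
  -- z t² = (q−1)² t² w³, hence z = (q−1)² w³
  have hiii : z * t^2 = (q-1)^2 * w^3 * t^2 := by
    linear_combination e0 - w*e1 + (w^2/2)*e2
  have hz3 : z = (q-1)^2 * w^3 :=
    mul_right_cancel₀ (pow_ne_zero 2 htne) hiii
  -- substituted equations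
  have EI : 2*(q-1)^2*(1+(q-2)*t)^2*w^3 = 6*(q-1)^2*t^2*w + 4*(q-1)*t := by
    linear_combination e2 - 2*(1+(q-2)*t)^2*hz3
  have EII : 2*(q-1)^2*t*(1+(q-2)*t)*w^3 = 1 - 3*(q-1)^2*t^2*w^2 := by
    linear_combination e1 - w*e2 - 2*t*(1+(q-2)*t)*hz3
  have hstar : 3*(1+(q-2)*t)*(q-1)^2*t^2*w^2 + 6*(q-1)^2*t^3*w
      + 4*(q-1)*t^2 - (1+(q-2)*t) = 0 := by
    linear_combination (1+(q-2)*t)*EII - t*EI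
  have hMw : ((1+(q-2)*t) - (q-1)*t^2) * (((1+(q-2)*t) - 3*(q-1)*t^2)*w)
      = ((1+(q-2)*t) - (q-1)*t^2) * (2*t) := by
    linear_combination (3*t^2/2)*EI - ((1+(q-2)*t)*w - 2*t)*hstar
  have hAat : 0 < (1+(q-2)*t) - (q-1)*t^2 := by
    have h1 : (0:ℝ) < (q-1)*t+1 := by
      have : (0:ℝ) ≤ (q-1)*t := mul_nonneg (by linarith) ht0
      linarith
    have h2 : (0:ℝ) < 1 - t := by linarith
    have h3 : (1+(q-2)*t) - (q-1)*t^2 = ((q-1)*t+1)*(1-t) := by ring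
    rw [h3]
    exact mul_pos h1 h2
  have hSw : ((1+(q-2)*t) - 3*(q-1)*t^2)*w = 2*t :=
    mul_left_cancel₀ (ne_of_gt hAat) hMw
  have hA9 : (1+(q-2)*t) * ((1+(q-2)*t) - (q-1)*t^2) * ((1+(q-2)*t) - 9*(q-1)*t^2) = 0 := by
    linear_combination (-(((1+(q-2)*t) - 3*(q-1)*t^2)^2))*hstar
      + (3*(1+(q-2)*t)*(q-1)^2*t^2*(((1+(q-2)*t) - 3*(q-1)*t^2)*w+2*t)
        + 6*(q-1)^2*t^3*((1+(q-2)*t) - 3*(q-1)*t^2))*hSw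
  have hApos : 0 < 1+(q-2)*t := by
    have : (0:ℝ) ≤ (q-2)*t := mul_nonneg (by linarith) ht0
    linarith
  have key : 1 + (q-2)*t = 9*(q-1)*t^2 := by
    rcases mul_eq_zero.mp hA9 with h | h
    · rcases mul_eq_zero.mp h with h' | h'
      · exact absurd h' (ne_of_gt hApos)
      · exact absurd h' (ne_of_gt hAat)
    · linarith
  -- conclude t = tTwo q
  have hprod : t*(18*(q-1)*t-(q-2)) = 2 + (q-2)*t := by linear_combination (-2)*key
  have hge : 0 ≤ 18*(q-1)*t - (q-2) := by
    by_contra hc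
    push_neg at hc
    have hneg : t*(18*(q-1)*t-(q-2)) < 0 := mul_neg_of_pos_of_neg htpos hc
    have : (0:ℝ) ≤ (q-2)*t := mul_nonneg (by linarith) ht0
    linarith
  have hsq : q^2+32*q-32 = (18*(q-1)*t - (q-2))^2 := by
    linear_combination (36*(q-1))*key
  have hroot : Real.sqrt (q^2+32*q-32) = 18*(q-1)*t - (q-2) := by
    rw [hsq, Real.sqrt_sq hge]
  have hden : (18:ℝ)*(q-1) ≠ 0 := by
    have : (0:ℝ) < q - 1 := by linarith
    positivity
  rw [tTwo, hroot]
  field_simp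
  rw [eq_div_iff (ne_of_gt (by linarith : (0:ℝ) < q - 1))]
  ring
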